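/- The H-Step rule is sound: if leak_H(h₁) = leak_H(h₂) and (s₁, s₂, next_H(h₁), next_H(h₂)) ∈ R ∪ G_F(R), then (s₁, s₂, h₁, h₂) ∈ G_F(R), where F = rbisimF. -/

import Mathlib

/-- A deterministic transition system with leakage. -/
structure TS (S : Type*) (A : Type*) where
  next : S → S
  leak : S → A

namespace TS

/-- The infinite leakage trace of a state. -/
def trace {S A : Type*} (T : TS S A) (s : S) : ℕ → A :=
  fun n => T.leak (T.next^[n] s)

/-- The functional whose greatest fixpoint is bisimilarity. -/
def bisimF {S A : Type*} (T : TS S A) : Set (S × S) →o Set (S × S) where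
  toFun R := {p | T.leak p.1 = T.leak p.2 ∧ (T.next p.1, T.next p.2) ∈ R}
  monotone' := fun _ _ h _ hp => ⟨hp.1, h hp.2⟩

/-- Bisimilarity. -/
def bisim {S A : Type*} (T : TS S A) : Set (S × S) := OrderHom.gfp (bisimF T)

end TS

/-- Quadruples of two contract states and two hardware states. -/
abbrev Quad (Sc Sh : Type*) := Sc × Sc × Sh × Sh

section Rel

variable {Sc A Sh B : Type*}

/-- Inner (inductive) functional of relative bisimilarity, parameterized by `R1`. -/
def rinner (C : TS Sc A) (H : TS Sh B) (R1 : Set (Quad Sc Sh)) :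
    Set (Quad Sc Sh) →o Set (Quad Sc Sh) where
  toFun R2 := {q | C.leak q.1 ≠ C.leak q.2.1 ∨
      (C.next q.1, C.next q.2.1, q.2.2.1, q.2.2.2) ∈ R2 ∨
      (H.leak q.2.2.1 = H.leak q.2.2.2 ∧
        (q.1, q.2.1, H.next q.2.2.1, H.next q.2.2.2) ∈ R1)}
  monotone' := fun _ _ h _ hq => by
    rcases hq with h1 | h2 | h3
    · exact Or.inl h1
    · exact Or.inr (Or.inl (h h2))
    · exact Or.inr (Or.inr h3)

/-- The mixed functional for relative bisimilarity: contract steps inductive,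
hardware steps coinductive. -/
def rbisimF (C : TS Sc A) (H : TS Sh B) : Set (Quad Sc Sh) →o Set (Quad Sc Sh) where
  toFun R1 := OrderHom.lfp (rinner C H R1)
  monotone' := fun R R' h => OrderHom.lfp.monotone (fun _ _ hq => by
    rcases hq with h1 | h2 | h3
    · exact Or.inl h1
    · exact Or.inr (Or.inl h2)
    · exact Or.inr (Or.inr ⟨h3.1, h h3.2⟩))

/-- Relative bisimilarity. -/
def rbisim (C : TS Sc A) (H : TS Sh B) : Set (Quad Sc Sh) :=
  OrderHom.gfp (rbisimF C H)

/-- The lockstep functional for relative bisimilarity. -/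
def rbisimLockF (C : TS Sc A) (H : TS Sh B) : Set (Quad Sc Sh) →o Set (Quad Sc Sh) where
  toFun R := {q | C.leak q.1 ≠ C.leak q.2.1 ∨
      (H.leak q.2.2.1 = H.leak q.2.2.2 ∧
        (C.next q.1, C.next q.2.1, H.next q.2.2.1, H.next q.2.2.2) ∈ R)}
  monotone' := fun _ _ h _ hq => by
    rcases hq with h1 | h2
    · exact Or.inl h1
    · exact Or.inr ⟨h2.1, h h2.2⟩

/-- Lockstep relative bisimilarity. -/
def rbisimLock (C : TS Sc A) (H : TS Sh B) : Set (Quad Sc Sh) :=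
  OrderHom.gfp (rbisimLockF C H)

/-- The naive relaxed (purely coinductive) functional. -/
def rbisimRelaxedF (C : TS Sc A) (H : TS Sh B) : Set (Quad Sc Sh) →o Set (Quad Sc Sh) where
  toFun R := {q | C.leak q.1 ≠ C.leak q.2.1 ∨
      (C.next q.1, C.next q.2.1, q.2.2.1, q.2.2.2) ∈ R ∨
      (H.leak q.2.2.1 = H.leak q.2.2.2 ∧
        (q.1, q.2.1, H.next q.2.2.1, H.next q.2.2.2) ∈ R)}
  monotone' := fun _ _ h _ hq => by
    rcases hq with h1 | h2 | h3
    · exact Or.inl h1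
    · exact Or.inr (Or.inl (h h2))
    · exact Or.inr (Or.inr ⟨h3.1, h h3.2⟩)

/-- Relaxed relative bisimilarity (unsound). -/
def rbisimRelaxed (C : TS Sc A) (H : TS Sh B) : Set (Quad Sc Sh) :=
  OrderHom.gfp (rbisimRelaxedF C H)

end Rel

/-- Parameterized greatest fixpoint (Paco): `GF F I = νX. F (X ∪ I)`. -/
def GF {U : Type*} (F : Set U →o Set U) (I : Set U) : Set U :=
  OrderHom.gfp ⟨fun X => F (X ∪ I),
    fun _ _ h => F.monotone (Set.union_subset_union h (subset_refl I))⟩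


theorem hStep_sound {Sc A Sh B : Type*} (C : TS Sc A) (H : TS Sh B)
    (R : Set (Quad Sc Sh)) (s1 s2 : Sc) (h1 h2 : Sh)
    (hleak : H.leak h1 = H.leak h2)
    (h : (s1, s2, H.next h1, H.next h2) ∈ R ∪ GF (rbisimF C H) R) :
    (s1, s2, h1, h2) ∈ GF (rbisimF C H) R := by
  have hfix := OrderHom.map_gfp (⟨fun X => (rbisimF C H) (X ∪ R),
    fun _ _ h => (rbisimF C H).monotone (Set.union_subset_union h (subset_refl R))⟩ :
    Set (Quad Sc Sh) →o Set (Quad Sc Sh))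
  show (s1, s2, h1, h2) ∈ GF (rbisimF C H) R
  rw [GF, ← hfix]
  show (s1, s2, h1, h2) ∈ rbisimF C H (GF (rbisimF C H) R ∪ R)
  show (s1, s2, h1, h2) ∈ OrderHom.lfp (rinner C H (GF (rbisimF C H) R ∪ R))
  rw [← OrderHom.map_lfp]
  refine Or.inr (Or.inr ⟨hleak, ?_⟩)
  rcases h with h | h
  · exact Or.inr h
  · exact Or.inl h
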